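/- Fix λ ≠ 0. Let Ω ⊂ ℝ^d be nonempty open and let φ : Ω → ℝ be smooth with 1 − λ ∇φ(ϑ)·ϑ > 0 on Ω. Suppose the map τ(ϑ) = ϑ·e^{−λ φ(ϑ)} is a diffeomorphism from Ω onto an open set Θ ⊂ ℝ^d, and define ψ : Θ → ℝ by ψ(τ(ϑ)) = (1/(−λ))·(e^{−λ φ(ϑ)} − 1). Then the ordinary gradient of ψ coincides with the λ-gradient of φ: for every ϑ ∈ Ω, ∇ψ(τ(ϑ)) = ∇φ(ϑ)/(1 − λ ∇φ(ϑ)·ϑ) = ∇^{c_λ} φ(ϑ). (In particular, for a λ-exponential family the subtractive potential φ_q and the divisive potential φ_λ define the same dual variable η, the escort expectation.) -/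

import Mathlib

open MeasureTheory Real
open scoped RealInnerProductSpace ENNReal BigOperators

noncomputable section

/-- Let `λ ≠ 0`, `Ω` nonempty open, `φ` smooth with `1 − λ∇φ(ϑ)·ϑ > 0` on
`Ω`, and suppose `τ(ϑ) = ϑ·e^{−λφ(ϑ)}` is a diffeomorphism from `Ω` onto an open set `Θ`.
Define `ψ` on `Θ` by `ψ(τ(ϑ)) = (1/(−λ))(e^{−λφ(ϑ)} − 1)`. Then the ordinary gradient of `ψ`
coincides with the λ-gradient of `φ`: `∇ψ(τ(ϑ)) = ∇φ(ϑ)/(1 − λ∇φ(ϑ)·ϑ)` for all `ϑ ∈ Ω`. -/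
theorem subtractive_divisive_same_dual {d : ℕ} (lam : ℝ) (hlam : lam ≠ 0)
    (Ω : Set (EuclideanSpace ℝ (Fin d))) (hne : Ω.Nonempty) (hop : IsOpen Ω)
    (φ : EuclideanSpace ℝ (Fin d) → ℝ) (hφ : ContDiffOn ℝ (⊤ : ℕ∞) φ Ω)
    (hpos : ∀ ϑ ∈ Ω, 0 < 1 - lam * ⟪gradient φ ϑ, ϑ⟫)
    (τ : EuclideanSpace ℝ (Fin d) → EuclideanSpace ℝ (Fin d))
    (hτ : ∀ ϑ, τ ϑ = Real.exp (-lam * φ ϑ) • ϑ)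
    (Θ : Set (EuclideanSpace ℝ (Fin d))) (hΘ : IsOpen Θ) (hrange : τ '' Ω = Θ)
    (g : EuclideanSpace ℝ (Fin d) → EuclideanSpace ℝ (Fin d))
    (hg : ContDiffOn ℝ (⊤ : ℕ∞) g Θ) (hinv : Set.InvOn g τ Ω Θ)
    (ψ : EuclideanSpace ℝ (Fin d) → ℝ)
    (hψ : ∀ ϑ ∈ Ω, ψ (τ ϑ) = (1 / (-lam)) * (Real.exp (-lam * φ ϑ) - 1)) :
    ∀ ϑ ∈ Ω,
      gradient ψ (τ ϑ) = (1 - lam * ⟪gradient φ ϑ, ϑ⟫)⁻¹ • gradient φ ϑ := by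
  intro ϑ hϑ

  have hη : τ ϑ ∈ Θ := hrange ▸ Set.mem_image_of_mem τ hϑ
  have hgτ : g (τ ϑ) = ϑ := hinv.1 hϑ
  have hφd : HasFDerivAt φ (fderiv ℝ φ ϑ) ϑ :=
    ((hφ.contDiffAt (hop.mem_nhds hϑ)).differentiableAt (by simp)).hasFDerivAt
  set Dφ := fderiv ℝ φ ϑ with hDφ
  have hgrad : ∀ v : EuclideanSpace ℝ (Fin d), ⟪gradient φ ϑ, v⟫ = Dφ v := by
    intro v
    simp [gradient, InnerProductSpace.toDual_symm_apply, hDφ]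
  set s := ⟪gradient φ ϑ, ϑ⟫ with hs
  have hsval : Dφ ϑ = s := (hgrad ϑ).symm
  set e := Real.exp (-lam * φ ϑ) with he
  have hepos : 0 < e := Real.exp_pos _
  have hexp : HasFDerivAt (fun x => Real.exp (-lam * φ x)) (e • ((-lam) • Dφ)) ϑ :=
    (hφd.const_mul (-lam)).exp
  set Dτ := e • ContinuousLinearMap.id ℝ (EuclideanSpace ℝ (Fin d)) + (e • ((-lam) • Dφ)).smulRight ϑ with hDτ
  have hτd : HasFDerivAt τ Dτ ϑ := by
    have h1 : HasFDerivAt (fun x => Real.exp (-lam * φ x) • x) Dτ ϑ :=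
      hexp.smul (hasFDerivAt_id ϑ)
    exact h1.congr_of_eventuallyEq (Filter.Eventually.of_forall fun x => (hτ x : τ x = Real.exp (-lam * φ x) • x))
  have hgd : HasFDerivAt g (fderiv ℝ g (τ ϑ)) (τ ϑ) :=
    ((hg.contDiffAt (hΘ.mem_nhds hη)).differentiableAt (by simp)).hasFDerivAt
  set Dg := fderiv ℝ g (τ ϑ) with hDg
  have hτd' : HasFDerivAt τ Dτ (g (τ ϑ)) := by rw [hgτ]; exact hτd
  have hcomp : HasFDerivAt (τ ∘ g) (Dτ.comp Dg) (τ ϑ) := hτd'.comp (τ ϑ) hgd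
  have hid : Dτ.comp Dg = ContinuousLinearMap.id ℝ (EuclideanSpace ℝ (Fin d)) := by
    have heq : (τ ∘ g) =ᶠ[nhds (τ ϑ)] id :=
      Filter.eventuallyEq_of_mem (hΘ.mem_nhds hη) (fun y hy => hinv.2 hy)
    have hcomp' : HasFDerivAt id (Dτ.comp Dg) (τ ϑ) :=
      hcomp.congr_of_eventuallyEq heq.symm
    exact hcomp'.unique (hasFDerivAt_id (τ ϑ))
  have hDτDg : ∀ v : EuclideanSpace ℝ (Fin d), Dτ (Dg v) = v := by
    intro v
    have := congrArg (fun L : EuclideanSpace ℝ (Fin d) →L[ℝ] EuclideanSpace ℝ (Fin d) => L v) hid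
    simpa using this
  -- F and ψ
  have hFd : HasFDerivAt (fun x => (1 / (-lam)) * (Real.exp (-lam * φ x) - 1))
      ((1 / (-lam)) • (e • ((-lam) • Dφ))) ϑ := (hexp.sub_const 1).const_mul (1 / (-lam))
  have hFd' : HasFDerivAt (fun x => (1 / (-lam)) * (Real.exp (-lam * φ x) - 1))
      ((1 / (-lam)) • (e • ((-lam) • Dφ))) (g (τ ϑ)) := by rw [hgτ]; exact hFd
  have hψF : ψ =ᶠ[nhds (τ ϑ)]
      ((fun x => (1 / (-lam)) * (Real.exp (-lam * φ x) - 1)) ∘ g) := by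
    filter_upwards [hΘ.mem_nhds hη] with y hy
    have : y ∈ τ '' Ω := hrange ▸ hy
    obtain ⟨x, hx, rfl⟩ := this
    rw [Function.comp_apply, hinv.1 hx, hψ x hx]
  have hψd : HasFDerivAt ψ (((1 / (-lam)) • (e • ((-lam) • Dφ))).comp Dg) (τ ϑ) :=
    (hFd'.comp (τ ϑ) hgd).congr_of_eventuallyEq hψF
  -- algebra
  have hkey : ∀ v : EuclideanSpace ℝ (Fin d), Dφ v = e * (1 - lam * s) * Dφ (Dg v) := by
    intro v
    conv_lhs => rw [← hDτDg v]
    simp [hDτ, ContinuousLinearMap.smulRight_apply, hsval]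
    ring
  have hne' : (1 : ℝ) - lam * s ≠ 0 := ne_of_gt (hpos ϑ hϑ)
  have hgradψ : HasGradientAt ψ ((1 - lam * s)⁻¹ • gradient φ ϑ) (τ ϑ) := by
    rw [hasGradientAt_iff_hasFDerivAt]
    refine hψd.congr_fderiv ?_
    symm
    ext v
    have h1 : (InnerProductSpace.toDual ℝ (EuclideanSpace ℝ (Fin d)) ((1 - lam * s)⁻¹ • gradient φ ϑ)) v
        = (1 - lam * s)⁻¹ * Dφ v := by
      simp [InnerProductSpace.toDual_apply_apply, real_inner_smul_left, hgrad v, hDφ]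
    rw [h1, hkey v]
    simp [ContinuousLinearMap.comp_apply]
    field_simp
  exact hgradψ.gradient
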